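/- If a partial order (X,≼) has a finite multi-utility (uᵢ)ᵢ₌₁,…,N, then it has a realizer (≼ᵢ)ᵢ₌₁,…,N consisting of N linear extensions. In particular, any partial order with finite geometrical dimension has finite Dushnik–Miller dimension. -/
import Mathlib


/-- A binary relation is a partial order: reflexive, antisymmetric, transitive. -/
def IsPartialOrderRel {X : Type*} (r : X → X → Prop) : Prop :=
  (∀ x, r x x) ∧ (∀ x y, r x y → r y x → x = y) ∧ (∀ x y z, r x y → r y z → r x z)

/-- `r'` extends `r`. -/
def RelExtends {X : Type*} (r r' : X → X → Prop) : Prop :=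
  ∀ x y, r x y → r' x y

/-- `r` is total: any two elements are comparable. -/
def TotalRel {X : Type*} (r : X → X → Prop) : Prop :=
  ∀ x y, r x y ∨ r y x

/-- `r'` is a linear extension of `r`: a total partial order extending `r`. -/
def IsLinearExtension {X : Type*} (r r' : X → X → Prop) : Prop :=
  IsPartialOrderRel r' ∧ TotalRel r' ∧ RelExtends r r'

/-- `x` and `y` are incomparable with respect to `r`. -/
def Incomp {X : Type*} (r : X → X → Prop) (x y : X) : Prop :=
  ¬ r x y ∧ ¬ r y x

/-- `D` is Debreu dense for `r`. -/
def DebreuDense {X : Type*} (r : X → X → Prop) (D : Set X) : Prop :=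
  ∀ x y, r x y → ¬ r y x → ∃ d ∈ D, r x d ∧ r d y

/-- `(X, r)` is Debreu separable: it has a countable Debreu dense subset. -/
def DebreuSeparable {X : Type*} (r : X → X → Prop) : Prop :=
  ∃ D : Set X, D.Countable ∧ DebreuDense r D

/-- The limit of a sequence of binary relations. -/
def LimitRel {X : Type*} (r : ℕ → X → X → Prop) : X → X → Prop :=
  fun x y => ∃ n₀ : ℕ, ∀ n, n₀ ≤ n → r n x y

theorem finite_multiUtility_to_finite_realizer {X : Type*}
    (r : X → X → Prop) (hr : IsPartialOrderRel r)
    (N : ℕ) (u : Fin N → X → ℝ)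
    (hu : ∀ x y, r x y ↔ ∀ i, u i x ≤ u i y) :
    ∃ R : Fin N → X → X → Prop,
      (∀ i, IsLinearExtension r (R i)) ∧
      (∀ x y, r x y ↔ ∀ i, R i x y) := by
  obtain ⟨hrefl, hanti, htrans⟩ := hr
  haveI : IsPartialOrder X r :=
    { refl := hrefl
      trans := htrans
      antisymm := hanti }
  obtain ⟨L, hLlin, hLext⟩ := extend_partialOrder r
  haveI := hLlin
  refine ⟨fun i x y => u i x < u i y ∨ (u i x = u i y ∧ L x y), ?_, ?_⟩
  · intro i
    refine ⟨⟨fun x => Or.inr ⟨rfl, refl_of L x⟩, ?_, ?_⟩, ?_, ?_⟩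
    · rintro x y (h1 | ⟨h1, hL1⟩) (h2 | ⟨h2, hL2⟩)
      · exact absurd h2 (not_lt.2 h1.le)
      · exact absurd h1 (not_lt.2 h2.le)
      · exact absurd h2 (not_lt.2 h1.le)
      · exact antisymm_of L hL1 hL2
    · rintro x y z (h1 | ⟨h1, hL1⟩) (h2 | ⟨h2, hL2⟩)
      · exact Or.inl (h1.trans h2)
      · exact Or.inl (h2 ▸ h1)
      · exact Or.inl (h1 ▸ h2)
      · exact Or.inr ⟨h1.trans h2, trans_of L hL1 hL2⟩
    · intro x y
      rcases lt_trichotomy (u i x) (u i y) with h | h | h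
      · exact Or.inl (Or.inl h)
      · rcases total_of L x y with hL | hL
        · exact Or.inl (Or.inr ⟨h, hL⟩)
        · exact Or.inr (Or.inr ⟨h.symm, hL⟩)
      · exact Or.inr (Or.inl h)
    · intro x y hxy
      rcases eq_or_lt_of_le ((hu x y).1 hxy i) with h | h
      · exact Or.inr ⟨h, hLext _ _ hxy⟩
      · exact Or.inl h
  · intro x y
    constructor
    · intro hxy i
      rcases eq_or_lt_of_le ((hu x y).1 hxy i) with h | h
      · exact Or.inr ⟨h, hLext _ _ hxy⟩
      · exact Or.inl h
    · intro h
      exact (hu x y).2 fun i => by rcases h i with h | ⟨h, _⟩ <;> [exact h.le; exact h.le]
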